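/- Let u be an infinite sequence over a finite alphabet whose block complexity satisfies fac_u(k) ≤ C·k for all k ≥ 1, for some constant C. Then the palindrome complexity of u is bounded: there exists a constant C' such that pal_u(k) ≤ C' for all k ≥ 1. -/

import Mathlib

namespace PalPaper

variable {α : Type*}

/-- The finite word `u i, u (i+1), …, u (i+k-1)` read off the infinite sequence `u`. -/
def factorAt (u : ℕ → α) (i k : ℕ) : List α :=
  (List.range k).map fun j => u (i + j)

/-- `w` occurs as a contiguous block (factor) in the infinite sequence `u`. -/
def IsFactor (u : ℕ → α) (w : List α) : Prop :=
  ∃ i, w = factorAt u i w.length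

/-- A palindrome is a word equal to its reversal. -/
def IsPalindrome (w : List α) : Prop := w.reverse = w

/-- Number of distinct factors of length `k` of `u`. -/
noncomputable def facComplexity (u : ℕ → α) (k : ℕ) : ℕ :=
  Set.ncard {w : List α | w.length = k ∧ IsFactor u w}

/-- Number of distinct palindromic factors of length `k` of `u`. -/
noncomputable def palComplexity (u : ℕ → α) (k : ℕ) : ℕ :=
  Set.ncard {w : List α | w.length = k ∧ IsFactor u w ∧ IsPalindrome w}

/-- `p ≥ 1` is a period of the finite word `w`. -/
def IsPeriodOf (p : ℕ) (w : List α) : Prop :=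
  1 ≤ p ∧ ∀ i (h : i + p < w.length), w[i]'(by omega) = w[i + p]'h

/-- The minimal period of a finite word. -/
noncomputable def minPeriod (w : List α) : ℕ := sInf {p | IsPeriodOf p w}

/-- The prefix of length `m` of the infinite sequence `u`, as a finite word. -/
def seqPrefix (u : ℕ → α) (m : ℕ) : List α := (List.range m).map u

/-- The word `σ(u 0) σ(u 1) ⋯ σ(u (n-1))`. -/
def substPrefix (σ : α → List α) (u : ℕ → α) (n : ℕ) : List α :=
  (List.range n).flatMap fun i => σ (u i)

/-- `v = σ(u)`: every word `σ(u 0) ⋯ σ(u (n-1))` is the corresponding prefix of `v`. -/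
def IsMorphicImage (σ : α → List α) (u v : ℕ → α) : Prop :=
  ∀ n, substPrefix σ u n = seqPrefix v (substPrefix σ u n).length

/-- `u` is a fixed point of the morphism `σ`, i.e. `σ(u) = u`. -/
def IsFixedPointOf (σ : α → List α) (u : ℕ → α) : Prop := IsMorphicImage σ u u

/-- The `k`-th iterate of a morphism, applied to a letter. -/
def morphIter (σ : α → List α) : ℕ → α → List α
  | 0, a => [a]
  | k + 1, a => (σ a).flatMap (morphIter σ k)

/-- A morphism is primitive if some iterate maps every letter to a word
containing every letter. -/
def IsPrimitive (σ : α → List α) : Prop :=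
  ∃ k, 1 ≤ k ∧ ∀ a b : α, b ∈ morphIter σ k a


/-! ### Auxiliary machinery for the proof -/

section Aux

def Per (f : ℕ → α) (p L : ℕ) : Prop := ∀ x, x + p < L → f x = f (x + p)

def PalAt (f : ℕ → α) (s n : ℕ) : Prop := ∀ j k, j + k + 1 = n → f (s + j) = f (s + k)

@[simp] lemma factorAt_length (u : ℕ → α) (i k : ℕ) : (factorAt u i k).length = k := by
  simp [factorAt]

lemma factorAt_getElem (u : ℕ → α) (i k j : ℕ) (h : j < (factorAt u i k).length) :
    (factorAt u i k)[j] = u (i + j) := by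
  simp [factorAt]

lemma factorAt_eq_iff {u v : ℕ → α} {i i' k : ℕ} :
    factorAt u i k = factorAt v i' k ↔ ∀ j < k, u (i + j) = v (i' + j) := by
  constructor
  · intro hE j hj
    have h1 : (factorAt u i k)[j]'(by simpa using hj) = (factorAt v i' k)[j]'(by simpa using hj) := by
      simp_rw [hE]
    rwa [factorAt_getElem, factorAt_getElem] at h1
  · intro hE
    apply List.ext_getElem (by simp)
    intro j h1 h2
    rw [factorAt_getElem, factorAt_getElem]
    exact hE j (by simpa using h1)

lemma isFactor_factorAt (u : ℕ → α) (i k : ℕ) : IsFactor u (factorAt u i k) :=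
  ⟨i, by rw [factorAt_length]⟩

lemma isPalindrome_factorAt_iff {f : ℕ → α} {s n : ℕ} :
    IsPalindrome (factorAt f s n) ↔ PalAt f s n := by
  unfold IsPalindrome PalAt
  constructor
  · intro hE j k hjk
    have h1 : ((factorAt f s n).reverse)[k]'(by simp; omega) = (factorAt f s n)[k]'(by simp; omega) := by
      simp_rw [hE]
    rw [List.getElem_reverse, factorAt_getElem, factorAt_getElem] at h1
    have : (factorAt f s n).length - 1 - k = j := by simp; omega
    rw [this] at h1
    exact h1
  · intro hP
    apply List.ext_getElem (by simp)
    intro j h1 h2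
    rw [List.getElem_reverse, factorAt_getElem, factorAt_getElem]
    have hj : j < n := by simpa using h2
    have : (factorAt f s n).length - 1 - j = n - 1 - j := by simp
    rw [this]
    exact hP (n - 1 - j) j (by omega)

lemma isPeriodOf_factorAt_iff {u : ℕ → α} {i n p : ℕ} :
    IsPeriodOf p (factorAt u i n) ↔ (1 ≤ p ∧ ∀ x, x + p < n → u (i + x) = u (i + (x + p))) := by
  unfold IsPeriodOf
  simp only [factorAt_length]
  constructor
  · rintro ⟨h1, h2⟩
    refine ⟨h1, fun x hx => ?_⟩
    have := h2 x hx
    rwa [factorAt_getElem, factorAt_getElem] at this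
  · rintro ⟨h1, h2⟩
    refine ⟨h1, fun x hx => ?_⟩
    rw [factorAt_getElem, factorAt_getElem]
    exact h2 x hx

lemma minPeriod_isPeriodOf (w : List α) : IsPeriodOf (minPeriod w) w := by
  have : {p | IsPeriodOf p w}.Nonempty :=
    ⟨w.length + 1, ⟨by omega, fun i h => absurd h (by omega)⟩⟩
  exact Nat.sInf_mem this

lemma minPeriod_le {p : ℕ} {w : List α} (h : IsPeriodOf p w) : minPeriod w ≤ p :=
  Nat.sInf_le h


lemma per_mono {f : ℕ → α} {p L L' : ℕ} (h : Per f p L) (hL : L' ≤ L) : Per f p L' :=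
  fun x hx => h x (by omega)

lemma per_reduce {f : ℕ → α} {p q L : ℕ} (hqp : q ≤ p) (hp : Per f p L) (hq : Per f q L) :
    Per f (p - q) (L - q) := by
  intro x hx
  have h1 : f x = f (x + p) := hp x (by omega)
  have h2 : f (x + (p - q)) = f (x + (p - q) + q) := hq _ (by omega)
  rw [show x + (p - q) + q = x + p by omega] at h2
  rw [h1, h2]

lemma per_steps {f : ℕ → α} {g L : ℕ} (h : Per f g L) :
    ∀ k y y', y + k = y' → y' < L → g ∣ k → f y = f y' := by
  intro k
  induction k using Nat.strong_induction_on with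
  | _ k ih =>
    intro y y' hk hy hdvd
    rcases Nat.eq_zero_or_pos k with hk0 | hk0
    · exact congrArg f (by omega)
    rcases Nat.eq_zero_or_pos g with hg0 | hg0
    · subst hg0; omega
    have hgk : g ≤ k := Nat.le_of_dvd hk0 hdvd
    have h1 : f y = f (y + g) := h y (by omega)
    have h2 : f (y + g) = f y' := by
      refine ih (k - g) (by omega) (y + g) y' (by omega) hy ?_
      exact (Nat.dvd_sub hdvd dvd_rfl)
    rw [h1, h2]

lemma per_prop {f : ℕ → α} {q g L a len : ℕ} (hq : 1 ≤ q) (hQ : Per f q L)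
    (hwin : ∀ y, a ≤ y → y + g < a + len → f y = f (y + g))
    (hlen : a + len ≤ L) (hg : 2 * q + g ≤ len) : Per f g L := by
  have claim1 : ∀ x, a ≤ x → x + g < L → f x = f (x + g) := by
    intro x
    induction x using Nat.strong_induction_on with
    | _ x ih =>
      intro hax hx
      by_cases hcase : x + g < a + len
      · exact hwin x hax hcase
      · have hx2 : a + 2 * q ≤ x := by omega
        have h1 : f (x - q) = f (x - q + q) := hQ (x - q) (by omega)
        have h2 : f (x - q + g) = f (x - q + g + q) := hQ (x - q + g) (by omega)
        have h3 : f (x - q) = f (x - q + g) := ih (x - q) (by omega) (by omega) (by omega)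
        rw [show x - q + q = x by omega] at h1
        rw [show x - q + g + q = x + g by omega] at h2
        rw [← h1, h3, h2]
  have claim2 : ∀ d x, a - x ≤ d → x + g < L → f x = f (x + g) := by
    intro d
    induction d using Nat.strong_induction_on with
    | _ d ih =>
      intro x hd hx
      by_cases hax : a ≤ x
      · exact claim1 x hax hx
      · have h1 : f x = f (x + q) := hQ x (by omega)
        have h2 : f (x + g) = f (x + g + q) := hQ (x + g) (by omega)
        have h3 : f (x + q) = f (x + q + g) := by
          refine ih (a - (x + q)) (by omega) (x + q) le_rfl (by omega)
        rw [h1, h3, h2, show x + q + g = x + g + q by omega]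
  exact fun x hx => claim2 (a - x) x le_rfl hx

lemma fwAux {f : ℕ → α} : ∀ p q L, 1 ≤ q → q ≤ p → 2 * (p + q) ≤ L →
    Per f p L → Per f q L → Per f (Nat.gcd p q) L := by
  intro p
  induction p using Nat.strong_induction_on with
  | _ p ih =>
    intro q L hq hqp hL hp hq'
    rcases eq_or_lt_of_le hqp with heq | hlt
    · subst heq; rwa [Nat.gcd_self]
    · have hr : Per f (p - q) (L - q) := per_reduce hqp hp hq'
      have hq2 : Per f q (L - q) := per_mono hq' (by omega)
      have hgr : Per f (Nat.gcd (p - q) q) (L - q) := by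
        by_cases hc : q ≤ p - q
        · exact ih (p - q) (by omega) q (L - q) hq hc (by omega) hr hq2
        · rw [Nat.gcd_comm]
          exact ih q (by omega) (p - q) (L - q) (by omega) (by omega) (by omega) hq2 hr
      rw [Nat.gcd_sub_self_left hqp] at hgr
      have hgle : Nat.gcd p q ≤ p - q := by
        rw [← Nat.gcd_sub_self_left hqp]
        exact Nat.gcd_le_left _ (by omega)
      exact per_prop (a := 0) (len := L - q) hq hq' (fun y _ hy => hgr y (by omega)) (by omega) (by omega)

lemma fw {f : ℕ → α} {p q L : ℕ} (hp : 1 ≤ p) (hq : 1 ≤ q) (hL : 2 * (p + q) ≤ L)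
    (h1 : Per f p L) (h2 : Per f q L) : Per f (Nat.gcd p q) L := by
  rcases le_total q p with hc | hc
  · exact fwAux p q L hq hc hL h1 h2
  · rw [Nat.gcd_comm]; exact fwAux q p L hp hc (by omega) h2 h1

lemma two_pal_per {f : ℕ → α} {d n : ℕ} (hp0 : PalAt f 0 n) (hpd : PalAt f d n) :
    Per f (2 * d) (n + d) := by
  intro x hx
  have h1 : f (d + (x + d)) = f (d + (n - 1 - x - d)) := hpd (x + d) (n - 1 - x - d) (by omega)
  have h2 : f (0 + (n - 1 - x)) = f (0 + x) := hp0 (n - 1 - x) x (by omega)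
  rw [show d + (x + d) = x + 2 * d by omega, show d + (n - 1 - x - d) = n - 1 - x by omega] at h1
  rw [show (0:ℕ) + (n - 1 - x) = n - 1 - x by omega, show (0:ℕ) + x = x by omega] at h2
  rw [← h2, ← h1]

lemma word_shift {h : ℕ → α} {g L s s' n : ℕ} (hper : Per h g L) (hs' : s' ≤ s)
    (hdvd : g ∣ s - s') (hL : s + n ≤ L) :
    factorAt h s n = factorAt h s' n := by
  apply factorAt_eq_iff.mpr
  intro j hj
  exact (per_steps hper (s - s') (s' + j) (s + j) (by omega) (by omega) hdvd).symm

lemma pw0 (f : ℕ → α) (n m s2 s3 : ℕ) (h8 : 8 * m ≤ n) (h02 : 0 < s2) (h23 : s2 < s3)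
    (h3m : s3 ≤ m) (hp1 : PalAt f 0 n) (hp2 : PalAt f s2 n) (hp3 : PalAt f s3 n) :
    factorAt f 0 n = factorAt f s2 n ∨ factorAt f 0 n = factorAt f s3 n ∨
      factorAt f s2 n = factorAt f s3 n := by
  have per2 : Per f (2 * s2) (n + s2) := two_pal_per hp1 hp2
  have per3 : Per f (2 * s3) (n + s3) := two_pal_per hp1 hp3
  have hgcd : Per f (Nat.gcd (2 * s2) (2 * s3)) n :=
    fw (by omega) (by omega) (by omega) (per_mono per2 (by omega)) (per_mono per3 (by omega))
  have hge : Nat.gcd (2 * s2) (2 * s3) = 2 * Nat.gcd s2 s3 := Nat.gcd_mul_left 2 s2 s3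
  set e := Nat.gcd s2 s3 with he
  rw [hge] at hgcd
  have hed2 : e ∣ s2 := Nat.gcd_dvd_left _ _
  have hed3 : e ∣ s3 := Nat.gcd_dvd_right _ _
  have he1 : 1 ≤ e := by
    rcases Nat.eq_zero_or_pos e with h0 | h0
    · have := Nat.eq_zero_of_gcd_eq_zero_left (he.symm.trans h0)
      omega
    · exact h0
  have hem : e ≤ s2 := Nat.le_of_dvd (by omega) hed2
  have hcand : ∀ d, e ∣ d → 1 ≤ d → d ≤ m → PalAt f d n →
      factorAt f d n = factorAt f 0 n ∨ factorAt f d n = factorAt f e n := by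
    intro d hdvd hd1 hdm hpd
    have hper : Per f (2 * e) (n + d) := by
      refine per_prop (q := 2 * d) (a := 0) (len := n) (by omega) (two_pal_per hp1 hpd)
        (fun y _ hy => hgcd y (by omega)) (by omega) (by omega)
    obtain ⟨c, hc⟩ := hdvd
    rcases Nat.even_or_odd c with hev | hodd
    · left
      obtain ⟨k, hk⟩ := hev
      have hd2 : d = 2 * e * k + 0 := by rw [hc, hk]; ring
      exact word_shift hper (Nat.zero_le d) ⟨k, by omega⟩ (by omega)
    · right
      obtain ⟨k, hk⟩ := hodd
      have hd2 : d = 2 * e * k + e := by rw [hc, hk]; ring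
      refine word_shift hper (by omega) ⟨k, by omega⟩ (by omega)
  rcases hcand s2 hed2 (by omega) (by omega) hp2 with h2c | h2c
  · exact Or.inl h2c.symm
  · rcases hcand s3 hed3 (by omega) h3m hp3 with h3c | h3c
    · exact Or.inr (Or.inl h3c.symm)
    · exact Or.inr (Or.inr (h2c.trans h3c.symm))

lemma pw (f : ℕ → α) (n m s1 s2 s3 : ℕ) (h8 : 8 * m ≤ n) (h12 : s1 < s2) (h23 : s2 < s3)
    (h3m : s3 ≤ m) (hp1 : PalAt f s1 n) (hp2 : PalAt f s2 n) (hp3 : PalAt f s3 n) :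
    factorAt f s1 n = factorAt f s2 n ∨ factorAt f s1 n = factorAt f s3 n ∨
      factorAt f s2 n = factorAt f s3 n := by
  have hpal : ∀ s, PalAt f (s1 + s) n → PalAt (fun x => f (s1 + x)) s n := by
    intro s hp j k hjk
    have := hp j k hjk
    show f (s1 + (s + j)) = f (s1 + (s + k))
    rw [show s1 + (s + j) = s1 + s + j by omega, show s1 + (s + k) = s1 + s + k by omega]
    exact this
  have hconv : ∀ s, factorAt (fun x => f (s1 + x)) s n = factorAt f (s1 + s) n := by
    intro s
    apply factorAt_eq_iff.mpr
    intro j hj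
    show f (s1 + (s + j)) = f (s1 + s + j)
    exact congrArg f (by omega)
  have := pw0 (fun x => f (s1 + x)) n m (s2 - s1) (s3 - s1) h8 (by omega) (by omega) (by omega)
    (hpal 0 (by simpa using hp1))
    (hpal (s2 - s1) (by rw [show s1 + (s2 - s1) = s2 by omega]; exact hp2))
    (hpal (s3 - s1) (by rw [show s1 + (s3 - s1) = s3 by omega]; exact hp3))
  rw [hconv 0, hconv (s2 - s1), hconv (s3 - s1), Nat.add_zero,
    show s1 + (s2 - s1) = s2 by omega, show s1 + (s3 - s1) = s3 by omega] at this
  exact this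

lemma pw' (f : ℕ → α) (n m s1 s2 s3 : ℕ) (h8 : 8 * m ≤ n) (h12 : s1 ≠ s2) (h13 : s1 ≠ s3)
    (h23 : s2 ≠ s3) (h1m : s1 ≤ m) (h2m : s2 ≤ m) (h3m : s3 ≤ m)
    (hp1 : PalAt f s1 n) (hp2 : PalAt f s2 n) (hp3 : PalAt f s3 n) :
    factorAt f s1 n = factorAt f s2 n ∨ factorAt f s1 n = factorAt f s3 n ∨
      factorAt f s2 n = factorAt f s3 n := by
  rcases lt_trichotomy s1 s2 with ha | ha | ha
  · rcases lt_trichotomy s2 s3 with hb | hb | hb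
    · exact pw f n m s1 s2 s3 h8 ha hb h3m hp1 hp2 hp3
    · omega
    · rcases lt_trichotomy s1 s3 with hc | hc | hc
      · rcases pw f n m s1 s3 s2 h8 hc hb h2m hp1 hp3 hp2 with h | h | h
        · exact Or.inr (Or.inl h)
        · exact Or.inl h
        · exact Or.inr (Or.inr h.symm)
      · omega
      · rcases pw f n m s3 s1 s2 h8 hc ha h2m hp3 hp1 hp2 with h | h | h
        · exact Or.inr (Or.inl h.symm)
        · exact Or.inr (Or.inr h.symm)
        · exact Or.inl h
  · omega
  · rcases lt_trichotomy s2 s3 with hb | hb | hb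
    · rcases lt_trichotomy s1 s3 with hc | hc | hc
      · rcases pw f n m s2 s1 s3 h8 ha hc h3m hp2 hp1 hp3 with h | h | h
        · exact Or.inl h.symm
        · exact Or.inr (Or.inr h)
        · exact Or.inr (Or.inl h)
      · omega
      · rcases pw f n m s2 s3 s1 h8 hb hc h1m hp2 hp3 hp1 with h | h | h
        · exact Or.inr (Or.inr h)
        · exact Or.inl h.symm
        · exact Or.inr (Or.inl h.symm)
    · omega
    · rcases pw f n m s3 s2 s1 h8 hb ha h1m hp3 hp2 hp1 with h | h | h
      · exact Or.inr (Or.inr h.symm)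
      · exact Or.inr (Or.inl h.symm)
      · exact Or.inl h.symm

/-- From a zone `[i, b)` of period `δ` (with break at `b`) we can read the suffix window
of the zone inside `f`. -/
lemma view_pre {u f : ℕ → α} {n m N i b δ s : ℕ} (hN : N = n + m) (h8 : 8 * m ≤ n)
    (hδm : δ ≤ m) (hs : s < m) (hib : i + n ≤ b)
    (hz : ∀ x, x + δ < b - i → u (i + x) = u (i + x + δ))
    (hf : ∀ x, x < N → u ((b - n + s) + x) = f x) :
    Per f δ (n - s) := by
  intro x hx
  have e1 : u ((b - n + s) + x) = f x := hf x (by omega)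
  have e2 : u ((b - n + s) + (x + δ)) = f (x + δ) := hf (x + δ) (by omega)
  have e3 := hz ((b - n + s) + x - i) (by omega)
  rw [show i + ((b - n + s) + x - i) = (b - n + s) + x by omega] at e3
  rw [show (b - n + s) + x + δ = (b - n + s) + (x + δ) by omega] at e3
  rw [← e1, ← e2]; exact e3

lemma view_brk {u f : ℕ → α} {n m N i b δ s : ℕ} (hN : N = n + m) (h8 : 8 * m ≤ n)
    (hδm : δ ≤ m) (hs : s < m) (hib : i + n ≤ b) (hbrk : u b ≠ u (b - δ))
    (hf : ∀ x, x < N → u ((b - n + s) + x) = f x) :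
    f (n - s) ≠ f (n - s - δ) := by
  have e1 : u ((b - n + s) + (n - s)) = f (n - s) := hf _ (by omega)
  have e2 : u ((b - n + s) + (n - s - δ)) = f (n - s - δ) := hf _ (by omega)
  rw [show (b - n + s) + (n - s) = b by omega] at e1
  rw [show (b - n + s) + (n - s - δ) = b - δ by omega] at e2
  exact fun hEq => hbrk (e1.trans (hEq.trans e2.symm))

/-- Transfer a `g`-periodicity of the window back into the zone, concluding `δ0 = g`
by minimality. -/
lemma view_transfer {u f : ℕ → α} {n m N g s' : ℕ} (hN : N = n + m) (h8 : 8 * m ≤ n)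
    (hs' : s' < m) (hg1 : 1 ≤ g)
    (hgcd : Per f g (n - s')) :
    ∀ i0 b0 δ0 s0, 1 ≤ δ0 → δ0 ≤ m → s0 ≤ s' → i0 + n ≤ b0 →
    (∀ x, x + δ0 < b0 - i0 → u (i0 + x) = u (i0 + x + δ0)) →
    (∀ x, x < N → u ((b0 - n + s0) + x) = f x) →
    (∀ p, 1 ≤ p → (∀ x, x + p < n → u (i0 + x) = u (i0 + x + p)) → δ0 ≤ p) →
    g ≤ δ0 → δ0 = g := by
  intro i0 b0 δ0 s0 hδ01 hδ0m hs0 hib0 hz0 hf0 hmin0 hgδ0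
  have hper : Per (fun y => u (i0 + y)) g (b0 - i0) := by
    refine per_prop (q := δ0) (a := (b0 - n + s0) - i0) (len := n - s') hδ01 ?_ ?_ (by omega) (by omega)
    · intro x hx
      have := hz0 x (by omega)
      simpa [Nat.add_assoc] using this
    · intro y hy hylt
      set x := y - ((b0 - n + s0) - i0) with hxdef
      have e1 : u ((b0 - n + s0) + x) = f x := hf0 x (by omega)
      have e2 : u ((b0 - n + s0) + (x + g)) = f (x + g) := hf0 (x + g) (by omega)
      have e3 : f x = f (x + g) := hgcd x (by omega)
      show u (i0 + y) = u (i0 + (y + g))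
      rw [show i0 + y = (b0 - n + s0) + x by omega,
          show i0 + (y + g) = (b0 - n + s0) + (x + g) by omega]
      rw [e1, e2]; exact e3
  have : δ0 ≤ g := by
    refine hmin0 g hg1 (fun x hx => ?_)
    have := hper x (by omega)
    simpa [Nat.add_assoc] using this
  omega

lemma view_unique_aux {u f : ℕ → α} {n m N i b δ s i' b' δ' s' : ℕ}
    (hN : N = n + m) (h8 : 8 * m ≤ n)
    (hδ1 : 1 ≤ δ) (hδm : δ ≤ m) (hs : s < m) (hib : i + n ≤ b)
    (hz : ∀ x, x + δ < b - i → u (i + x) = u (i + x + δ))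
    (hbrk : u b ≠ u (b - δ))
    (hf : ∀ x, x < N → u ((b - n + s) + x) = f x)
    (hmin : ∀ p, 1 ≤ p → (∀ x, x + p < n → u (i + x) = u (i + x + p)) → δ ≤ p)
    (hδ1' : 1 ≤ δ') (hδm' : δ' ≤ m) (hs' : s' < m) (hib' : i' + n ≤ b')
    (hz' : ∀ x, x + δ' < b' - i' → u (i' + x) = u (i' + x + δ'))
    (hbrk' : u b' ≠ u (b' - δ'))
    (hf' : ∀ x, x < N → u ((b' - n + s') + x) = f x)
    (hmin' : ∀ p, 1 ≤ p → (∀ x, x + p < n → u (i' + x) = u (i' + x + p)) → δ' ≤ p)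
    (hss' : s ≤ s') :
    δ = δ' ∧ s = s' := by
  have pre : Per f δ (n - s) := view_pre hN h8 hδm hs hib hz hf
  have pre' : Per f δ' (n - s') := view_pre hN h8 hδm' hs' hib' hz' hf'
  have hgcd : Per f (Nat.gcd δ δ') (n - s') :=
    fw hδ1 hδ1' (by omega) (per_mono pre (by omega)) pre'
  set g := Nat.gcd δ δ' with hgdef
  have hgδ : g ∣ δ := Nat.gcd_dvd_left _ _
  have hgδ' : g ∣ δ' := Nat.gcd_dvd_right _ _
  have hg1 : 1 ≤ g := by
    rcases Nat.eq_zero_or_pos g with h0 | h0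
    · have := Nat.eq_zero_of_gcd_eq_zero_left (hgdef.symm.trans h0)
      omega
    · exact h0
  have hdg : δ = g :=
    view_transfer hN h8 hs' hg1 hgcd i b δ s hδ1 hδm hss' hib hz hf hmin
      (Nat.le_of_dvd (by omega) hgδ)
  have hdg' : δ' = g :=
    view_transfer hN h8 hs' hg1 hgcd i' b' δ' s' hδ1' hδm' le_rfl hib' hz' hf' hmin'
      (Nat.le_of_dvd (by omega) hgδ')
  have hδδ' : δ = δ' := by rw [hdg, hdg']
  refine ⟨hδδ', ?_⟩
  by_contra hne
  have hlt : s < s' := by omega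
  have brkf' : f (n - s') ≠ f (n - s' - δ') :=
    view_brk hN h8 hδm' hs' hib' hbrk' hf'
  have : f (n - s' - δ) = f ((n - s' - δ) + δ) := pre (n - s' - δ) (by omega)
  rw [show (n - s' - δ) + δ = n - s' by omega] at this
  rw [hδδ'] at this
  exact brkf' this.symm

lemma view_unique {u f : ℕ → α} {n m N i b δ s i' b' δ' s' : ℕ}
    (hN : N = n + m) (h8 : 8 * m ≤ n)
    (hδ1 : 1 ≤ δ) (hδm : δ ≤ m) (hs : s < m) (hib : i + n ≤ b)
    (hz : ∀ x, x + δ < b - i → u (i + x) = u (i + x + δ))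
    (hbrk : u b ≠ u (b - δ))
    (hf : ∀ x, x < N → u ((b - n + s) + x) = f x)
    (hmin : ∀ p, 1 ≤ p → (∀ x, x + p < n → u (i + x) = u (i + x + p)) → δ ≤ p)
    (hδ1' : 1 ≤ δ') (hδm' : δ' ≤ m) (hs' : s' < m) (hib' : i' + n ≤ b')
    (hz' : ∀ x, x + δ' < b' - i' → u (i' + x) = u (i' + x + δ'))
    (hbrk' : u b' ≠ u (b' - δ'))
    (hf' : ∀ x, x < N → u ((b' - n + s') + x) = f x)
    (hmin' : ∀ p, 1 ≤ p → (∀ x, x + p < n → u (i' + x) = u (i' + x + p)) → δ' ≤ p) :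
    δ = δ' ∧ s = s' := by
  rcases le_total s s' with hc | hc
  · exact view_unique_aux hN h8 hδ1 hδm hs hib hz hbrk hf hmin hδ1' hδm' hs' hib' hz' hbrk'
      hf' hmin' hc
  · obtain ⟨h1, h2⟩ := view_unique_aux hN h8 hδ1' hδm' hs' hib' hz' hbrk' hf' hmin'
      hδ1 hδm hs hib hz hbrk hf hmin hc
    exact ⟨h1.symm, h2.symm⟩

lemma zone_word_eq {u f : ℕ → α} {n m N i b δ s : ℕ} (hN : N = n + m) (h8 : 8 * m ≤ n)
    (hδ1 : 1 ≤ δ) (hδm : δ ≤ m) (hs : s < m) (hib : i + n ≤ b)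
    (hz : ∀ x, x + δ < b - i → u (i + x) = u (i + x + δ))
    (hf : ∀ x, x < N → u ((b - n + s) + x) = f x) :
    factorAt u i n = factorAt (fun x => f (x % δ))
      ((δ - ((b - n + s) - i) % δ) % δ) n := by
  set D := (b - n + s) - i with hD
  set e := (δ - D % δ) % δ with he
  have hzper : Per (fun y => u (i + y)) δ (b - i) := by
    intro x hx
    simpa [Nat.add_assoc] using hz x hx
  have hDe : δ ∣ D + e := by
    rcases Nat.eq_zero_or_pos (D % δ) with hr | hr
    · have he0 : e = 0 := by rw [he, hr, Nat.sub_zero, Nat.mod_self]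
      rw [he0, Nat.add_zero]
      exact Nat.dvd_of_mod_eq_zero hr
    · have hrlt : D % δ < δ := Nat.mod_lt _ (by omega)
      have he0 : e = δ - D % δ := by rw [he]; exact Nat.mod_eq_of_lt (by omega)
      have hdm : D = δ * (D / δ) + D % δ := (Nat.div_add_mod D δ).symm
      have hsum : D + e = δ * (D / δ) + δ := by omega
      exact ⟨D / δ + 1, by rw [hsum]; ring⟩
  apply factorAt_eq_iff.mpr
  intro t ht
  show u (i + t) = f ((e + t) % δ)
  have hmod : (e + t) % δ < δ := Nat.mod_lt _ (by omega)
  have e2 : u ((b - n + s) + ((e + t) % δ)) = f ((e + t) % δ) := hf _ (by omega)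
  rw [← e2, show (b - n + s) + ((e + t) % δ) = i + (D + (e + t) % δ) by omega]
  set y2 := D + (e + t) % δ with hy2
  have hEq : y2 ≡ t [MOD δ] := by
    have c1 : D + (e + t) % δ ≡ D + (e + t) [MOD δ] := Nat.ModEq.add_left D (Nat.mod_modEq _ _)
    have c3 : (D + e) + t ≡ 0 + t [MOD δ] :=
      Nat.ModEq.add_right t ((Nat.modEq_zero_iff_dvd).mpr hDe)
    have c5 : D + (e + t) ≡ 0 + t [MOD δ] := by
      rw [show D + (e + t) = (D + e) + t by ring]; exact c3
    have := c1.trans c5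
    simpa using this
  have hy2lt : y2 < b - i := by omega
  rcases le_total t y2 with hc | hc
  · exact per_steps hzper (y2 - t) t y2 (by omega) hy2lt
      ((Nat.modEq_iff_dvd' hc).mp hEq.symm)
  · exact (per_steps hzper (t - y2) y2 t (by omega) (by omega)
      ((Nat.modEq_iff_dvd' hc).mp hEq)).symm

def RA (u : ℕ → α) (n m N : ℕ) (w V : List α) : Prop :=
  ∃ i b δ s, 1 ≤ δ ∧ δ ≤ m ∧ s < m ∧ i + n ≤ b ∧ w = factorAt u i n ∧
    (∀ x, x + δ < b - i → u (i + x) = u (i + x + δ)) ∧ u b ≠ u (b - δ) ∧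
    (∀ p, 1 ≤ p → (∀ x, x + p < n → u (i + x) = u (i + x + p)) → δ ≤ p) ∧
    V = factorAt u (b - n + s) N

lemma RA_right {u : ℕ → α} {n m N : ℕ} (hN : N = n + m) (h8 : 8 * m ≤ n)
    {V w1 w2 w3 : List α}
    (hp1 : IsPalindrome w1) (hp2 : IsPalindrome w2) (hp3 : IsPalindrome w3)
    (h1 : RA u n m N w1 V) (h2 : RA u n m N w2 V) (h3 : RA u n m N w3 V) :
    w1 = w2 ∨ w1 = w3 ∨ w2 = w3 := by
  obtain ⟨i1, b1, δ1, s1, hδ11, hδm1, hs1, hib1, hw1, hz1, hbrk1, hmin1, hV1⟩ := h1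
  obtain ⟨i2, b2, δ2, s2, hδ12, hδm2, hs2, hib2, hw2, hz2, hbrk2, hmin2, hV2⟩ := h2
  obtain ⟨i3, b3, δ3, s3, hδ13, hδm3, hs3, hib3, hw3, hz3, hbrk3, hmin3, hV3⟩ := h3
  set f : ℕ → α := fun x => u ((b1 - n + s1) + x) with hfdef
  have hf1 : ∀ x, x < N → u ((b1 - n + s1) + x) = f x := fun x _ => rfl
  have hf2 : ∀ x, x < N → u ((b2 - n + s2) + x) = f x := by
    intro x hx
    exact factorAt_eq_iff.mp (hV2.symm.trans hV1) x hx
  have hf3 : ∀ x, x < N → u ((b3 - n + s3) + x) = f x := by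
    intro x hx
    exact factorAt_eq_iff.mp (hV3.symm.trans hV1) x hx
  obtain ⟨hδ21, hs21⟩ := view_unique hN h8 hδ12 hδm2 hs2 hib2 hz2 hbrk2 hf2 hmin2
    hδ11 hδm1 hs1 hib1 hz1 hbrk1 hf1 hmin1
  obtain ⟨hδ31, hs31⟩ := view_unique hN h8 hδ13 hδm3 hs3 hib3 hz3 hbrk3 hf3 hmin3
    hδ11 hδm1 hs1 hib1 hz1 hbrk1 hf1 hmin1
  -- common period δ1 and offset s1
  rw [hδ21] at hz2 hbrk2
  rw [hs21] at hf2
  rw [hδ31] at hz3 hbrk3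
  rw [hs31] at hf3
  have hzw1 := zone_word_eq hN h8 hδ11 hδm1 hs1 hib1 hz1 hf1
  have hzw2 := zone_word_eq hN h8 hδ11 hδm1 hs1 hib2 hz2 hf2
  have hzw3 := zone_word_eq hN h8 hδ11 hδm1 hs1 hib3 hz3 hf3
  set F : ℕ → α := fun x => f (x % δ1) with hF
  set E1 := (δ1 - ((b1 - n + s1) - i1) % δ1) % δ1 with hE1
  set E2 := (δ1 - ((b2 - n + s1) - i2) % δ1) % δ1 with hE2
  set E3 := (δ1 - ((b3 - n + s1) - i3) % δ1) % δ1 with hE3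
  have hw1' : w1 = factorAt F E1 n := hw1.trans hzw1
  have hw2' : w2 = factorAt F E2 n := hw2.trans hzw2
  have hw3' : w3 = factorAt F E3 n := hw3.trans hzw3
  by_cases h12 : E1 = E2
  · exact Or.inl (by rw [hw1', hw2', h12])
  by_cases h13 : E1 = E3
  · exact Or.inr (Or.inl (by rw [hw1', hw3', h13]))
  by_cases h23 : E2 = E3
  · exact Or.inr (Or.inr (by rw [hw2', hw3', h23]))
  have hEm : E1 ≤ m ∧ E2 ≤ m ∧ E3 ≤ m := by
    refine ⟨?_, ?_, ?_⟩ <;>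
      [rw [hE1]; rw [hE2]; rw [hE3]] <;>
      exact le_trans (Nat.le_of_lt_succ (Nat.lt_succ_of_lt (Nat.mod_lt _ (by omega)))) hδm1
  rw [hw1'] at hp1; rw [hw2'] at hp2; rw [hw3'] at hp3
  rcases pw' F n m E1 E2 E3 h8 h12 h13 h23 hEm.1 hEm.2.1 hEm.2.2
      (isPalindrome_factorAt_iff.mp hp1) (isPalindrome_factorAt_iff.mp hp2)
      (isPalindrome_factorAt_iff.mp hp3) with hc | hc | hc
  · exact Or.inl (by rw [hw1', hw2', hc])
  · exact Or.inr (Or.inl (by rw [hw1', hw3', hc]))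
  · exact Or.inr (Or.inr (by rw [hw2', hw3', hc]))

def RB (u : ℕ → α) (n m N : ℕ) (w V : List α) : Prop :=
  ∃ i s, m ≤ i ∧ w = factorAt u i n ∧ s < m ∧ V = factorAt u (i - s) N

lemma RA_left {u : ℕ → α} {n m N : ℕ} (hN : N = n + m) (h8 : 8 * m ≤ n)
    (hap : ∀ I p, 1 ≤ p → ∃ j, I ≤ j ∧ u (j + p) ≠ u j)
    {w : List α} (hfac : IsFactor u w) (hlen : w.length = n) (hminp : minPeriod w ≤ m) :
    ∃ b : ℕ, n ≤ b ∧ (∀ s, s < m → RA u n m N w (factorAt u (b - n + s) N)) ∧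
      (∀ s1 s2, s1 < m → s2 < m →
        factorAt u (b - n + s1) N = factorAt u (b - n + s2) N → s1 = s2) := by
  obtain ⟨i, hi⟩ := hfac
  rw [hlen] at hi
  set δ := minPeriod w with hδ
  have hδper : IsPeriodOf δ w := minPeriod_isPeriodOf w
  rw [hi] at hδper
  obtain ⟨hδ1, hzw⟩ := isPeriodOf_factorAt_iff.mp hδper
  have hmin : ∀ p, 1 ≤ p → (∀ x, x + p < n → u (i + x) = u (i + x + p)) → δ ≤ p := by
    intro p hp hper
    have : IsPeriodOf p (factorAt u i n) := by
      refine isPeriodOf_factorAt_iff.mpr ⟨hp, fun x hx => ?_⟩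
      rw [← Nat.add_assoc]
      exact hper x hx
    rw [← hi] at this
    exact minPeriod_le this
  set Sb := {j | i + n ≤ j ∧ u j ≠ u (j - δ)} with hSb
  have hSbne : Sb.Nonempty := by
    obtain ⟨j, hj, hne⟩ := hap (i + n) δ hδ1
    refine ⟨j + δ, by omega, ?_⟩
    rw [show j + δ - δ = j by omega]
    exact hne
  set b := sInf Sb with hbdef
  have hb : i + n ≤ b ∧ u b ≠ u (b - δ) := Nat.sInf_mem hSbne
  have zoneP : ∀ x, x + δ < b - i → u (i + x) = u (i + x + δ) := by
    intro x hx
    by_cases hc : x + δ < n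
    · rw [show i + x + δ = i + (x + δ) by omega]
      exact hzw x hc
    · have hjb : i + x + δ < b := by omega
      have hnot : ¬ (i + n ≤ i + x + δ ∧ u (i + x + δ) ≠ u (i + x + δ - δ)) :=
        Nat.notMem_of_lt_sInf hjb
      push_neg at hnot
      have := hnot (by omega)
      rw [show i + x + δ - δ = i + x by omega] at this
      exact this.symm
  refine ⟨b, by omega, ?_, ?_⟩
  · intro s hs
    have hδm : δ ≤ m := hminp
    exact ⟨i, b, δ, s, hδ1, hδm, hs, hb.1, hi, zoneP, hb.2, hmin, rfl⟩
  · intro s1 s2 hs1 hs2 hEq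
    by_contra hne
    -- wlog s1 < s2
    have key : ∀ t1 t2, t1 < m → t2 < m → t1 < t2 →
        factorAt u (b - n + t1) N = factorAt u (b - n + t2) N → False := by
      intro t1 t2 ht1 ht2 hlt hE
      have hpt := factorAt_eq_iff.mp hE
      have hδm : δ ≤ m := hminp
      have A1 : u ((b - n + t1) + (n - t2)) = u ((b - n + t2) + (n - t2)) :=
        hpt (n - t2) (by omega)
      have A2 : u ((b - n + t1) + (n - t2 - δ)) = u ((b - n + t2) + (n - t2 - δ)) :=
        hpt (n - t2 - δ) (by omega)
      rw [show (b - n + t2) + (n - t2) = b by omega] at A1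
      rw [show (b - n + t2) + (n - t2 - δ) = b - δ by omega] at A2
      have A3 : u ((b - n + t1) + (n - t2 - δ)) = u ((b - n + t1) + (n - t2)) := by
        have := zoneP ((b - n + t1) + (n - t2 - δ) - i) (by omega)
        rw [show i + ((b - n + t1) + (n - t2 - δ) - i) = (b - n + t1) + (n - t2 - δ) by omega]
          at this
        rw [show (b - n + t1) + (n - t2 - δ) + δ = (b - n + t1) + (n - t2) by omega] at this
        exact this
      exact hb.2 ((A1.symm.trans A3.symm).trans A2)
    rcases lt_trichotomy s1 s2 with hc | hc | hc
    · exact key s1 s2 hs1 hs2 hc hEq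
    · exact hne hc
    · exact key s2 s1 hs2 hs1 hc hEq.symm

lemma RB_left {u : ℕ → α} {n m N : ℕ} (hN : N = n + m) (h8 : 8 * m ≤ n)
    {w : List α} {i : ℕ} (hi : w = factorAt u i n) (him : m ≤ i)
    (hminp : ¬ minPeriod w ≤ m) :
    (∀ s, s < m → RB u n m N w (factorAt u (i - s) N)) ∧
      (∀ s1 s2, s1 < m → s2 < m →
        factorAt u (i - s1) N = factorAt u (i - s2) N → s1 = s2) := by
  constructor
  · intro s hs
    exact ⟨i, s, him, hi, hs, rfl⟩
  · intro s1 s2 hs1 hs2 hEq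
    by_contra hne
    have key : ∀ t1 t2, t1 < m → t2 < m → t1 < t2 →
        factorAt u (i - t1) N = factorAt u (i - t2) N → False := by
      intro t1 t2 ht1 ht2 hlt hE
      have hpt := factorAt_eq_iff.mp hE
      set d := t2 - t1 with hd
      have hper : ∀ x, x + d < n → u (i + x) = u (i + (x + d)) := by
        intro x hx
        have := hpt (t2 + x) (by omega)
        rw [show i - t1 + (t2 + x) = i + (x + d) by omega,
            show i - t2 + (t2 + x) = i + x by omega] at this
        exact this.symm
      have hperiod : IsPeriodOf d (factorAt u i n) :=
        isPeriodOf_factorAt_iff.mpr ⟨by omega, hper⟩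
      rw [← hi] at hperiod
      exact hminp (le_trans (minPeriod_le hperiod) (by omega))
    rcases lt_trichotomy s1 s2 with hc | hc | hc
    · exact key s1 s2 hs1 hs2 hc hEq
    · exact hne hc
    · exact key s2 s1 hs2 hs1 hc hEq.symm

lemma RB_right {u : ℕ → α} {n m N : ℕ} (hN : N = n + m) (h8 : 8 * m ≤ n)
    {V w1 w2 w3 : List α}
    (hp1 : IsPalindrome w1) (hp2 : IsPalindrome w2) (hp3 : IsPalindrome w3)
    (h1 : RB u n m N w1 V) (h2 : RB u n m N w2 V) (h3 : RB u n m N w3 V) :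
    w1 = w2 ∨ w1 = w3 ∨ w2 = w3 := by
  obtain ⟨i1, s1, hm1, hw1, hs1, hV1⟩ := h1
  obtain ⟨i2, s2, hm2, hw2, hs2, hV2⟩ := h2
  obtain ⟨i3, s3, hm3, hw3, hs3, hV3⟩ := h3
  set f : ℕ → α := fun x => u ((i1 - s1) + x) with hfdef
  have hf1 : ∀ x, x < N → u ((i1 - s1) + x) = f x := fun x _ => rfl
  have hf2 : ∀ x, x < N → u ((i2 - s2) + x) = f x := fun x hx =>
    factorAt_eq_iff.mp (hV2.symm.trans hV1) x hx
  have hf3 : ∀ x, x < N → u ((i3 - s3) + x) = f x := fun x hx =>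
    factorAt_eq_iff.mp (hV3.symm.trans hV1) x hx
  have key : ∀ (i s : ℕ) (w : List α), m ≤ i → s < m → w = factorAt u i n →
      (∀ x, x < N → u ((i - s) + x) = f x) → w = factorAt f s n := by
    intro i s w him hs hw hf
    rw [hw]
    apply factorAt_eq_iff.mpr
    intro t ht
    have := hf (s + t) (by omega)
    rw [show (i - s) + (s + t) = i + t by omega] at this
    exact this
  have hw1' : w1 = factorAt f s1 n := key i1 s1 w1 hm1 hs1 hw1 hf1
  have hw2' : w2 = factorAt f s2 n := key i2 s2 w2 hm2 hs2 hw2 hf2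
  have hw3' : w3 = factorAt f s3 n := key i3 s3 w3 hm3 hs3 hw3 hf3
  by_cases h12 : s1 = s2
  · exact Or.inl (by rw [hw1', hw2', h12])
  by_cases h13 : s1 = s3
  · exact Or.inr (Or.inl (by rw [hw1', hw3', h13]))
  by_cases h23 : s2 = s3
  · exact Or.inr (Or.inr (by rw [hw2', hw3', h23]))
  rw [hw1'] at hp1; rw [hw2'] at hp2; rw [hw3'] at hp3
  rcases pw' f n m s1 s2 s3 h8 h12 h13 h23 (by omega) (by omega) (by omega)
      (isPalindrome_factorAt_iff.mp hp1) (isPalindrome_factorAt_iff.mp hp2)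
      (isPalindrome_factorAt_iff.mp hp3) with hc | hc | hc
  · exact Or.inl (by rw [hw1', hw2', hc])
  · exact Or.inr (Or.inl (by rw [hw1', hw3', hc]))
  · exact Or.inr (Or.inr (by rw [hw2', hw3', hc]))

lemma B2_three {u : ℕ → α} {n m : ℕ} (h8 : 8 * m ≤ n)
    {w1 w2 w3 : List α} {i1 i2 i3 : ℕ}
    (hp1 : IsPalindrome w1) (hp2 : IsPalindrome w2) (hp3 : IsPalindrome w3)
    (hw1 : w1 = factorAt u i1 n) (hw2 : w2 = factorAt u i2 n) (hw3 : w3 = factorAt u i3 n)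
    (hi1 : i1 ≤ m) (hi2 : i2 ≤ m) (hi3 : i3 ≤ m) :
    w1 = w2 ∨ w1 = w3 ∨ w2 = w3 := by
  by_cases h12 : i1 = i2
  · exact Or.inl (by rw [hw1, hw2, h12])
  by_cases h13 : i1 = i3
  · exact Or.inr (Or.inl (by rw [hw1, hw3, h13]))
  by_cases h23 : i2 = i3
  · exact Or.inr (Or.inr (by rw [hw2, hw3, h23]))
  rw [hw1] at hp1; rw [hw2] at hp2; rw [hw3] at hp3
  rcases pw' u n m i1 i2 i3 h8 h12 h13 h23 hi1 hi2 hi3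
      (isPalindrome_factorAt_iff.mp hp1) (isPalindrome_factorAt_iff.mp hp2)
      (isPalindrome_factorAt_iff.mp hp3) with hc | hc | hc
  · exact Or.inl (by rw [hw1, hw2, hc])
  · exact Or.inr (Or.inl (by rw [hw1, hw3, hc]))
  · exact Or.inr (Or.inr (by rw [hw2, hw3, hc]))

lemma facSet_finite [Fintype α] (u : ℕ → α) (k : ℕ) :
    {w : List α | w.length = k ∧ IsFactor u w}.Finite :=
  (List.finite_length_eq α k).subset (fun _ hw => hw.1)

lemma palSet_finite [Fintype α] (u : ℕ → α) (k : ℕ) :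
    {w : List α | w.length = k ∧ IsFactor u w ∧ IsPalindrome w}.Finite :=
  (List.finite_length_eq α k).subset (fun _ hw => hw.1)

lemma pal_le_fac [Fintype α] (u : ℕ → α) (k : ℕ) :
    palComplexity u k ≤ facComplexity u k :=
  Set.ncard_le_ncard (fun _ hw => ⟨hw.1, hw.2.1⟩) (facSet_finite u k)

/-- A sequence with block complexity `O(k)` has bounded palindrome
complexity. -/
theorem stmt14 {α : Type*} [Fintype α] (u : ℕ → α) (C : ℕ)
    (h : ∀ k, 1 ≤ k → facComplexity u k ≤ C * k) :
    ∃ C' : ℕ, ∀ k, 1 ≤ k → palComplexity u k ≤ C' := by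
  classical
  by_cases hper : ∃ I P, 1 ≤ P ∧ ∀ j, I ≤ j → u (j + P) = u j
  · obtain ⟨I, P, hP1, hP⟩ := hper
    refine ⟨I + P, fun k _ => ?_⟩
    have hred : ∀ i, ∃ i', i' < I + P ∧ factorAt u i' k = factorAt u i k := by
      intro i
      induction i using Nat.strong_induction_on with
      | _ i ih =>
        by_cases hc : i < I + P
        · exact ⟨i, hc, rfl⟩
        · obtain ⟨i', hi', hEq⟩ := ih (i - P) (by omega)
          refine ⟨i', hi', hEq.trans ?_⟩
          apply factorAt_eq_iff.mpr
          intro j hj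
          have := hP (i - P + j) (by omega)
          rw [show i - P + j + P = i + j by omega] at this
          exact this.symm
    have hsub : {w : List α | w.length = k ∧ IsFactor u w ∧ IsPalindrome w} ⊆
        ↑((Finset.range (I + P)).image (fun i => factorAt u i k)) := by
      rintro w ⟨hlen, ⟨i, hi⟩, _⟩
      rw [hlen] at hi
      obtain ⟨i', hi', hEq⟩ := hred i
      rw [Finset.coe_image]
      exact ⟨i', by simpa using hi', by rw [hi, ← hEq]⟩
    calc palComplexity u k ≤ _ :=
          Set.ncard_le_ncard hsub ((Finset.range (I + P)).image _).finite_toSet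
      _ ≤ I + P := by
          rw [Set.ncard_coe_finset]
          exact Finset.card_image_le.trans (by simp)
  · push_neg at hper
    refine ⟨60 * C + 2, fun n hn => ?_⟩
    by_cases hsmall : n < 16
    · have h1 := (pal_le_fac u n).trans (h n hn)
      have h2 : C * n ≤ C * 15 := Nat.mul_le_mul_left _ (by omega)
      omega
    -- main case
    set m := n / 8 with hm
    set N := n + m with hNdef
    have hN : N = n + m := rfl
    have h8 : 8 * m ≤ n := by omega
    have hm2 : 2 ≤ m := by omega
    have hfinFac := facSet_finite u N
    have hfinPal := palSet_finite u n
    set S := hfinPal.toFinset with hS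
    set T := hfinFac.toFinset with hT
    have hmemS : ∀ w : List α, w ∈ S ↔
        (w.length = n ∧ IsFactor u w ∧ IsPalindrome w) := fun w => Set.Finite.mem_toFinset _
    have hmemT : ∀ w : List α, w ∈ T ↔ (w.length = N ∧ IsFactor u w) :=
      fun w => Set.Finite.mem_toFinset _
    have hTcard : T.card ≤ C * N := by
      have := h N (by omega)
      rwa [facComplexity, Set.ncard_eq_toFinset_card _ hfinFac] at this
    have hScard : palComplexity u n = S.card := by
      rw [palComplexity, Set.ncard_eq_toFinset_card _ hfinPal]
    have hwinT : ∀ j : ℕ, factorAt u j N ∈ T := by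
      intro j
      rw [hmemT]
      exact ⟨factorAt_length u j N, isFactor_factorAt u j N⟩
    -- class A
    have hA : (S.filter (fun w => minPeriod w ≤ m)).card * m ≤ T.card * 2 := by
      apply Finset.card_mul_le_card_mul (RA u n m N)
      · intro w hw
        rw [Finset.mem_filter, hmemS] at hw
        obtain ⟨⟨hlen, hfac, _⟩, hminp⟩ := hw
        obtain ⟨b, hbn, hRA, hinj⟩ := RA_left hN h8 hper hfac hlen hminp
        have hcard : (Finset.range m).card ≤
            (Finset.bipartiteAbove (RA u n m N) T w).card := by
          apply Finset.card_le_card_of_injOn (fun s => factorAt u (b - n + s) N)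
          · intro s hs
            rw [Finset.mem_coe, Finset.mem_range] at hs
            rw [Finset.mem_coe, Finset.mem_bipartiteAbove]
            exact ⟨hwinT _, hRA s hs⟩
          · intro s1 hs1 s2 hs2 hEq
            simp only [Finset.coe_range, Set.mem_Iio] at hs1 hs2
            exact hinj s1 s2 hs1 hs2 hEq
        simpa using hcard
      · intro V hV
        by_contra hgt
        push_neg at hgt
        rw [Finset.two_lt_card] at hgt
        obtain ⟨w1, hw1, w2, hw2, w3, hw3, h12, h13, h23⟩ := hgt
        rw [Finset.mem_bipartiteBelow, Finset.mem_filter, hmemS] at hw1 hw2 hw3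
        rcases RA_right hN h8 hw1.1.1.2.2 hw2.1.1.2.2 hw3.1.1.2.2 hw1.2 hw2.2 hw3.2 with
          hc | hc | hc
        · exact h12 hc
        · exact h13 hc
        · exact h23 hc
    -- class B1
    have hB1 : ((S.filter (fun w => ¬ minPeriod w ≤ m)).filter
        (fun w => ∃ i, m ≤ i ∧ w = factorAt u i n)).card * m ≤ T.card * 2 := by
      apply Finset.card_mul_le_card_mul (RB u n m N)
      · intro w hw
        rw [Finset.mem_filter, Finset.mem_filter, hmemS] at hw
        obtain ⟨⟨⟨hlen, hfac, _⟩, hminp⟩, i, him, hi⟩ := hw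
        obtain ⟨hRB, hinj⟩ := RB_left hN h8 hi him hminp
        have hcard : (Finset.range m).card ≤
            (Finset.bipartiteAbove (RB u n m N) T w).card := by
          apply Finset.card_le_card_of_injOn (fun s => factorAt u (i - s) N)
          · intro s hs
            rw [Finset.mem_coe, Finset.mem_range] at hs
            rw [Finset.mem_coe, Finset.mem_bipartiteAbove]
            exact ⟨hwinT _, hRB s hs⟩
          · intro s1 hs1 s2 hs2 hEq
            simp only [Finset.coe_range, Set.mem_Iio] at hs1 hs2
            exact hinj s1 s2 hs1 hs2 hEq
        simpa using hcard
      · intro V hV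
        by_contra hgt
        push_neg at hgt
        rw [Finset.two_lt_card] at hgt
        obtain ⟨w1, hw1, w2, hw2, w3, hw3, h12, h13, h23⟩ := hgt
        rw [Finset.mem_bipartiteBelow, Finset.mem_filter, Finset.mem_filter, hmemS]
          at hw1 hw2 hw3
        rcases RB_right hN h8 hw1.1.1.1.2.2 hw2.1.1.1.2.2 hw3.1.1.1.2.2 hw1.2 hw2.2 hw3.2 with
          hc | hc | hc
        · exact h12 hc
        · exact h13 hc
        · exact h23 hc
    -- class B2
    have hB2 : ((S.filter (fun w => ¬ minPeriod w ≤ m)).filter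
        (fun w => ¬ ∃ i, m ≤ i ∧ w = factorAt u i n)).card ≤ 2 := by
      by_contra hgt
      push_neg at hgt
      rw [Finset.two_lt_card] at hgt
      obtain ⟨w1, hw1, w2, hw2, w3, hw3, h12, h13, h23⟩ := hgt
      rw [Finset.mem_filter, Finset.mem_filter, hmemS] at hw1 hw2 hw3
      have hocc : ∀ w : List α, (w.length = n ∧ IsFactor u w ∧ IsPalindrome w) →
          (∀ i, m ≤ i → w ≠ factorAt u i n) → ∃ i, i ≤ m ∧ w = factorAt u i n := by
        rintro w ⟨hlen, ⟨i, hi⟩, _⟩ hno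
        rw [hlen] at hi
        by_cases hc : m ≤ i
        · exact absurd hi (hno i hc)
        · exact ⟨i, by omega, hi⟩
      obtain ⟨i1, hi1m, hi1⟩ := hocc w1 hw1.1.1 hw1.2
      obtain ⟨i2, hi2m, hi2⟩ := hocc w2 hw2.1.1 hw2.2
      obtain ⟨i3, hi3m, hi3⟩ := hocc w3 hw3.1.1 hw3.2
      rcases B2_three h8 hw1.1.1.2.2 hw2.1.1.2.2 hw3.1.1.2.2 hi1 hi2 hi3 hi1m hi2m hi3m with
        hc | hc | hc
      · exact h12 hc
      · exact h13 hc
      · exact h23 hc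
    -- combine
    have hsplit1 : (S.filter (fun w => minPeriod w ≤ m)).card +
        (S.filter (fun w => ¬ minPeriod w ≤ m)).card = S.card :=
      Finset.card_filter_add_card_filter_not _
    have hsplit2 : ((S.filter (fun w => ¬ minPeriod w ≤ m)).filter
          (fun w => ∃ i, m ≤ i ∧ w = factorAt u i n)).card +
        ((S.filter (fun w => ¬ minPeriod w ≤ m)).filter
          (fun w => ¬ ∃ i, m ≤ i ∧ w = factorAt u i n)).card =
        (S.filter (fun w => ¬ minPeriod w ≤ m)).card :=
      Finset.card_filter_add_card_filter_not _
    have hN13 : N ≤ 13 * m := by omega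
    have hbound : ∀ q : ℕ, q * m ≤ T.card * 2 → q ≤ 26 * C := by
      intro q hq
      have h1 : q * m ≤ (C * N) * 2 := hq.trans (Nat.mul_le_mul_right _ hTcard)
      have h2 : C * N * 2 ≤ C * (13 * m) * 2 :=
        Nat.mul_le_mul_right _ (Nat.mul_le_mul_left _ hN13)
      have h3 : q * m ≤ (26 * C) * m := by
        refine h1.trans (h2.trans (le_of_eq ?_))
        ring
      exact Nat.le_of_mul_le_mul_right h3 (by omega)
    have := hbound _ hA
    have := hbound _ hB1
    omega

end Aux

end PalPaper
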